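/- Suppose (A_n)_{n∈ℤ} is a sequence of Laurent polynomials in ℚ[M^{±1}, L^{±1}] such that the shifted sequence P_n(M,L) := A_n(M, L M^{-4n}) satisfies a linear recursion of order 4 with constant coefficients in ℚ(M,L) (nonzero leading and trailing coefficients). If the Newton polygon of P_n has vertices whose coordinates are affine-linear in n for all large n, then the Newton polygon of A_n has vertices whose coordinates are polynomials in n of degree at most 2 for all large n. -/

import Mathlib

/- STATEMENT 15: If A_n ∈ ℚ[M^±,L^±] is such that P_n := A_n(M, LM^{-4n}) satisfies an
order-4 linear recursion with constant (nonzero leading and trailing) coefficients, and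
the Newton polygon of P_n has affine-linear vertices for all large n, then the Newton
polygon of A_n has vertices whose coordinates are polynomials in n of degree ≤ 2 for all
large n. -/

/-- Laurent polynomials ℚ[M^{±1}, L^{±1}]; an exponent pair p = (x,y) records the
exponent x of L and y of M ((L,M)-coordinates). -/
abbrev Laurent : Type := AddMonoidAlgebra ℚ (ℤ × ℤ)

/-- The Newton polygon of a Laurent polynomial. -/
noncomputable def newton (f : Laurent) : Set (ℝ × ℝ) :=
  convexHull ℝ ((fun p : ℤ × ℤ => ((p.1 : ℝ), (p.2 : ℝ))) '' ↑f.coeff.support)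

/-- The shear of exponents corresponding to the substitution L ↦ L M^{-4n}. -/
def shear (n : ℤ) : (ℤ × ℤ) ≃ (ℤ × ℤ) where
  toFun p := (p.1, p.2 - 4*n*p.1)
  invFun p := (p.1, p.2 + 4*n*p.1)
  left_inv p := by cases p; simp
  right_inv p := by cases p; simp

theorem newton_quadratic_of_shifted_holonomic
    (A P : ℤ → Laurent)
    (hP : ∀ n : ℤ, P n = AddMonoidAlgebra.ofCoeff (Finsupp.equivMapDomain (shear n) (A n).coeff))
    (c : Fin 5 → Laurent) (hc0 : c 0 ≠ 0) (hc4 : c 4 ≠ 0)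
    (hrec : ∀ n : ℤ,
      c 0 * P n + c 1 * P (n+1) + c 2 * P (n+2) + c 3 * P (n+3) + c 4 * P (n+4) = 0)
    (hlin : ∃ (N : ℤ) (k : ℕ) (a b : Fin k → ℚ × ℚ), ∀ n : ℤ, N ≤ n →
      newton (P n) = convexHull ℝ (Set.range fun i : Fin k =>
        ((((a i).1 * n + (b i).1 : ℚ) : ℝ), (((a i).2 * n + (b i).2 : ℚ) : ℝ)))) :
    ∃ (N : ℤ) (k : ℕ) (a b d : Fin k → ℚ × ℚ), ∀ n : ℤ, N ≤ n →
      newton (A n) = convexHull ℝ (Set.range fun i : Fin k =>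
        ((((a i).1 * n^2 + (b i).1 * n + (d i).1 : ℚ) : ℝ),
         (((a i).2 * n^2 + (b i).2 * n + (d i).2 : ℚ) : ℝ))) := by
  obtain ⟨N, k, a, b, h⟩ := hlin
  refine ⟨N, k, (fun i => (0, 4 * (a i).1)), (fun i => ((a i).1, (a i).2 + 4 * (b i).1)),
    (fun i => ((b i).1, (b i).2)), fun n hn => ?_⟩
  set L : (ℝ × ℝ) →ₗ[ℝ] (ℝ × ℝ) :=
    LinearMap.prod (LinearMap.fst ℝ ℝ ℝ)
      (LinearMap.snd ℝ ℝ ℝ + ((4 * n : ℝ)) • LinearMap.fst ℝ ℝ ℝ) with hL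
  have hsupp : (P n).coeff.support = (A n).coeff.support.map (shear n).toEmbedding := by
    rw [hP n]; rfl
  have hrealize : (fun p : ℤ × ℤ => ((p.1 : ℝ), (p.2 : ℝ))) '' ↑(A n).coeff.support
      = L '' ((fun p : ℤ × ℤ => ((p.1 : ℝ), (p.2 : ℝ))) '' ↑(P n).coeff.support) := by
    rw [hsupp, Finset.coe_map, ← Set.image_comp, ← Set.image_comp]
    apply Set.image_congr
    intro p _
    simp only [hL, Function.comp_apply, Equiv.coe_toEmbedding, shear, Equiv.coe_fn_mk,
      LinearMap.prod_apply, Function.prod, LinearMap.add_apply, LinearMap.smul_apply,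
      LinearMap.fst_apply, LinearMap.snd_apply, smul_eq_mul]
    rw [Prod.ext_iff]
    constructor <;> · show _ = _; push_cast; ring_nf
  have hN : newton (A n) = L '' newton (P n) := by
    rw [newton, newton, hrealize, L.image_convexHull]
  rw [hN, h n hn, L.image_convexHull, ← Set.range_comp]
  refine congrArg _ (congrArg _ (funext fun i => ?_))
  simp only [hL, Function.comp_apply, LinearMap.prod_apply, Function.prod, LinearMap.add_apply,
    LinearMap.smul_apply, LinearMap.fst_apply, LinearMap.snd_apply, smul_eq_mul]
  rw [Prod.ext_iff]
  constructor <;> · show _ = _; push_cast; ring_nf
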